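/- Let X be a right A-Galois object and δ the modular element of A. If φ'_X is any δ-invariant functional on X, i.e. a linear functional with (φ'_X ⊗ id)(α(x)) = φ'_X(x)·δ for all x ∈ X, then there exists c ∈ k such that φ'_X = c·φ_X. -/

import Mathlib

open TensorProduct

noncomputable section

variable (k : Type*) [Field k]

/-- Apply a linear functional to the second tensor factor. -/
def applySnd {M N : Type*} [AddCommGroup M] [Module k M]
    [AddCommGroup N] [Module k N] (f : N →ₗ[k] k) : M ⊗[k] N →ₗ[k] M :=
  (TensorProduct.rid k M).toLinearMap ∘ₗ LinearMap.lTensor M f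

/-- Apply a linear functional to the first tensor factor. -/
def applyFst {M N : Type*} [AddCommGroup M] [Module k M]
    [AddCommGroup N] [Module k N] (f : M →ₗ[k] k) : M ⊗[k] N →ₗ[k] N :=
  (TensorProduct.lid k N).toLinearMap ∘ₗ LinearMap.rTensor N f

variable (A X : Type*) [Ring A] [HopfAlgebra k A] [Ring X] [Algebra k X]

/-- The Galois map `V : X ⊗ X → X ⊗ A`, `x ⊗ y ↦ (x ⊗ 1) * α y`. -/
def galoisV (α : X →ₐ[k] X ⊗[k] A) : X ⊗[k] X →ₗ[k] X ⊗[k] A :=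
  LinearMap.mul' k (X ⊗[k] A) ∘ₗ
    TensorProduct.map ((TensorProduct.mk k X A).flip 1) α.toLinearMap

/-- A Hopf algebra with bijective antipode and faithful left integral `φ`,
together with a right Galois coaction `α` on `X` with trivial coinvariants. -/
structure GaloisContext where
  φ : A →ₗ[k] k
  φ_ne : φ ≠ 0
  φ_integral : ∀ a : A, applySnd k φ (Coalgebra.comul a) = φ a • (1 : A)
  φ_faithful_left : ∀ a : A, (∀ b : A, φ (a * b) = 0) → a = 0
  φ_faithful_right : ∀ a : A, (∀ b : A, φ (b * a) = 0) → a = 0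
  antipode_bijective : Function.Bijective (HopfAlgebra.antipode (R := k) (A := A))
  α : X →ₐ[k] X ⊗[k] A
  coassoc : ∀ x : X,
    TensorProduct.assoc k X A A ((LinearMap.rTensor A α.toLinearMap) (α x))
      = LinearMap.lTensor X (Coalgebra.comul (R := k) (A := A)) (α x)
  counit_id : ∀ x : X,
    applySnd k (Coalgebra.counit (R := k) (A := A)) (α x) = x
  coinv_trivial : ∀ x : X, α x = x ⊗ₜ[k] (1 : A) → ∃ c : k, x = c • (1 : X)
  galois : Function.Bijective (galoisV k A X α)

variable {k A X}

/-- The Galois map as a linear equivalence. -/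
def GaloisContext.V (G : GaloisContext k A X) : (X ⊗[k] X) ≃ₗ[k] (X ⊗[k] A) :=
  LinearEquiv.ofBijective (galoisV k A X G.α) G.galois

/-- The map `β : A → X ⊗ X`, `a ↦ V⁻¹(1 ⊗ a)`. -/
def GaloisContext.β (G : GaloisContext k A X) : A →ₗ[k] X ⊗[k] X :=
  G.V.symm.toLinearMap ∘ₗ TensorProduct.mk k X A 1

end

noncomputable section Aux
open Coalgebra TensorProduct

variable {k : Type*} [Field k]

section Basic
variable {M N M' N' : Type*} [AddCommGroup M] [Module k M] [AddCommGroup N] [Module k N]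
  [AddCommGroup M'] [Module k M'] [AddCommGroup N'] [Module k N']

@[simp] lemma applySnd_tmul (f : N →ₗ[k] k) (x : M) (y : N) :
    applySnd k f (x ⊗ₜ[k] y) = f y • x := by simp [applySnd]

@[simp] lemma applyFst_tmul (f : M →ₗ[k] k) (x : M) (y : N) :
    applyFst k f (x ⊗ₜ[k] y) = f x • y := by simp [applyFst]

lemma applyFst_applySnd_swap (f : M →ₗ[k] k) (g : N →ₗ[k] k) (t : M ⊗[k] N) :
    f (applySnd k g t) = g (applyFst k f t) := by
  induction t using TensorProduct.induction_on with
  | zero => simp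
  | tmul x y => simp [smul_eq_mul, mul_comm]
  | add s t hs ht => simp only [map_add, hs, ht]

lemma applyFst_rTensor (f : M →ₗ[k] k) (g : M' →ₗ[k] M) (t : M' ⊗[k] N) :
    applyFst k f (LinearMap.rTensor N g t) = applyFst k (f ∘ₗ g) t := by
  induction t using TensorProduct.induction_on with
  | zero => simp
  | tmul x y => simp
  | add s t hs ht => simp only [map_add, hs, ht]

lemma rTensor_toSpanSingleton (f : M →ₗ[k] k) (v : M') (t : M ⊗[k] N) :
    LinearMap.rTensor N (LinearMap.toSpanSingleton k M' v ∘ₗ f) t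
      = v ⊗ₜ[k] applyFst k f t := by
  induction t using TensorProduct.induction_on with
  | zero => simp
  | tmul x y => simp [LinearMap.toSpanSingleton_apply, smul_tmul, tmul_smul]
  | add s t hs ht => simp only [map_add, hs, ht, tmul_add]

lemma lTensor_toSpanSingleton (f : N →ₗ[k] k) (v : N') (t : M ⊗[k] N) :
    LinearMap.lTensor M (LinearMap.toSpanSingleton k N' v ∘ₗ f) t
      = applySnd k f t ⊗ₜ[k] v := by
  induction t using TensorProduct.induction_on with
  | zero => simp
  | tmul x y => simp [LinearMap.toSpanSingleton_apply, smul_tmul, tmul_smul]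
  | add s t hs ht => simp only [map_add, hs, ht, add_tmul]

end Basic

section Alg
variable {B C : Type*} [Ring B] [Algebra k B] [Ring C] [Algebra k C]

lemma applySnd_one_mul (f : C →ₗ[k] k) (z : B) (t : B ⊗[k] C) :
    applySnd k f ((z ⊗ₜ[k] (1 : C)) * t) = z * applySnd k f t := by
  induction t using TensorProduct.induction_on with
  | zero => simp
  | tmul x y => simp [Algebra.TensorProduct.tmul_mul_tmul, mul_smul_comm]
  | add s t hs ht => simp only [mul_add, map_add, hs, ht]

lemma applyFst_mul_tmul (f : B →ₗ[k] k) (t : B ⊗[k] C) (c : B) (d : C) :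
    applyFst k f (t * (c ⊗ₜ[k] d))
      = (applyFst k (f ∘ₗ LinearMap.mulRight k c) t) * d := by
  induction t using TensorProduct.induction_on with
  | zero => simp
  | tmul x y => simp [Algebra.TensorProduct.tmul_mul_tmul, smul_mul_assoc]
  | add s t hs ht => simp only [add_mul, map_add, hs, ht]

end Alg
end Aux
section Hopf
variable {k : Type*} [Field k] {A : Type*} [Ring A] [HopfAlgebra k A]
open Coalgebra TensorProduct HopfAlgebra

lemma applySnd_counit_comul (a : A) :
    applySnd k (counit (R := k) (A := A)) (comul a) = a := by
  obtain ⟨s, hs⟩ := TensorProduct.exists_finset (R := k) (Coalgebra.comul (R := k) a)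
  have h := Coalgebra.lTensor_counit_comul (R := k) a
  rw [hs] at h ⊢
  simp only [map_sum, LinearMap.lTensor_tmul] at h
  have := congrArg (TensorProduct.rid k A) h
  simpa [smul_eq_mul, Algebra.smul_def, mul_comm] using this

lemma applyFst_counit_comul (a : A) :
    applyFst k (counit (R := k) (A := A)) (comul a) = a := by
  obtain ⟨s, hs⟩ := TensorProduct.exists_finset (R := k) (Coalgebra.comul (R := k) a)
  have h := Coalgebra.rTensor_counit_comul (R := k) a
  rw [hs] at h ⊢
  simp only [map_sum, LinearMap.rTensor_tmul] at h
  have := congrArg (TensorProduct.lid k A) h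
  simpa using this

end Hopf

section Hopf2
variable {k : Type*} [Field k] {A : Type*} [Ring A] [HopfAlgebra k A]
open Coalgebra TensorProduct HopfAlgebra

lemma applySnd_one_tmul_mul {B C : Type*} [Ring B] [Algebra k B] [Ring C] [Algebra k C]
    (f : C →ₗ[k] k) (x : C) (t : B ⊗[k] C) :
    applySnd k f (((1 : B) ⊗ₜ[k] x) * t) = applySnd k (f ∘ₗ LinearMap.mulLeft k x) t := by
  induction t using TensorProduct.induction_on with
  | zero => simp
  | tmul p q => simp [Algebra.TensorProduct.tmul_mul_tmul]
  | add s t hs ht => simp only [mul_add, map_add, hs, ht]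

lemma strong_invariance (φ : A →ₗ[k] k)
    (hφ : ∀ a : A, applySnd k φ (Coalgebra.comul a) = φ a • (1 : A)) (a b : A) :
    applySnd k (φ ∘ₗ LinearMap.mulLeft k a) (Coalgebra.comul (R := k) b)
      = applySnd k (φ ∘ₗ LinearMap.mulRight k b)
          (LinearMap.rTensor A (HopfAlgebra.antipode (R := k)) (Coalgebra.comul (R := k) a)) := by
  classical
  set ra := ℛ k a with hra
  set r₁ : ∀ i : A × A, Coalgebra.Repr k (ra.left i) (A × A) := fun i => ℛ k (ra.left i) with hr₁
  set r₂ : ∀ i : A × A, Coalgebra.Repr k (ra.right i) (A × A) := fun i => ℛ k (ra.right i) with hr₂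
  have key := Coalgebra.sum_tmul_tmul_eq (R := k) ra r₁ r₂
  set Q : A ⊗[k] (A ⊗[k] A) →ₗ[k] A :=
    LinearMap.mul' k A ∘ₗ
      TensorProduct.map (HopfAlgebra.antipode (R := k))
        (applySnd k φ ∘ₗ LinearMap.mulRight k (Coalgebra.comul (R := k) b)) with hQ
  have hQt : ∀ (u v q : A), Q (u ⊗ₜ[k] (v ⊗ₜ[k] q))
      = HopfAlgebra.antipode (R := k) u
          * applySnd k φ ((v ⊗ₜ[k] q) * Coalgebra.comul (R := k) b) := by
    intro u v q; simp [hQ]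
  have key2 := congrArg Q key
  simp only [map_sum, hQt] at key2
  -- compute the left-hand side of key2
  have hL : ∀ i ∈ ra.index, ∑ j ∈ (r₁ i).index,
      HopfAlgebra.antipode (R := k) ((r₁ i).left j)
        * applySnd k φ (((r₁ i).right j ⊗ₜ[k] ra.right i) * Coalgebra.comul (R := k) b)
      = Coalgebra.counit (R := k) (ra.left i) •
          applySnd k φ (((1 : A) ⊗ₜ[k] ra.right i) * Coalgebra.comul (R := k) b) := by
    intro i _
    have hsplit : ∀ (v : A), ((v ⊗ₜ[k] ra.right i) * Coalgebra.comul (R := k) b)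
        = (v ⊗ₜ[k] (1 : A)) * (((1 : A) ⊗ₜ[k] ra.right i) * Coalgebra.comul (R := k) b) := by
      intro v
      rw [← mul_assoc, Algebra.TensorProduct.tmul_mul_tmul, mul_one, one_mul]
    calc ∑ j ∈ (r₁ i).index,
        HopfAlgebra.antipode (R := k) ((r₁ i).left j)
          * applySnd k φ (((r₁ i).right j ⊗ₜ[k] ra.right i) * Coalgebra.comul (R := k) b)
        = ∑ j ∈ (r₁ i).index,
            (HopfAlgebra.antipode (R := k) ((r₁ i).left j) * (r₁ i).right j)
              * applySnd k φ (((1 : A) ⊗ₜ[k] ra.right i) * Coalgebra.comul (R := k) b) := by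
          refine Finset.sum_congr rfl fun j _ => ?_
          rw [hsplit, applySnd_one_mul, mul_assoc]
      _ = Coalgebra.counit (R := k) (ra.left i) •
            applySnd k φ (((1 : A) ⊗ₜ[k] ra.right i) * Coalgebra.comul (R := k) b) := by
          rw [← Finset.sum_mul, HopfAlgebra.sum_antipode_mul_eq_smul (r₁ i), smul_mul_assoc,
            one_mul]
  rw [Finset.sum_congr rfl hL] at key2
  -- compute the right-hand side of key2
  have hR : ∀ i ∈ ra.index, ∑ j ∈ (r₂ i).index,
      HopfAlgebra.antipode (R := k) (ra.left i)
        * applySnd k φ (((r₂ i).left j ⊗ₜ[k] (r₂ i).right j) * Coalgebra.comul (R := k) b)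
      = φ (ra.right i * b) • HopfAlgebra.antipode (R := k) (ra.left i) := by
    intro i _
    rw [← Finset.mul_sum, ← map_sum, ← Finset.sum_mul, (r₂ i).eq, ← Bialgebra.comul_mul,
      hφ, Algebra.mul_smul_comm, mul_one]
  rw [Finset.sum_congr rfl hR] at key2
  -- identify with the claimed statement
  have ha : ∑ i ∈ ra.index, Coalgebra.counit (R := k) (ra.left i) • ra.right i = a := by
    have h := applyFst_counit_comul (k := k) a
    rw [← ra.eq] at h
    simpa [map_sum] using h
  calc applySnd k (φ ∘ₗ LinearMap.mulLeft k a) (Coalgebra.comul (R := k) b)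
      = applySnd k φ (((1 : A) ⊗ₜ[k] a) * Coalgebra.comul (R := k) b) := by
        rw [applySnd_one_tmul_mul]
    _ = applySnd k φ (((1 : A) ⊗ₜ[k]
          (∑ i ∈ ra.index, Coalgebra.counit (R := k) (ra.left i) • ra.right i))
            * Coalgebra.comul (R := k) b) := by rw [ha]
    _ = ∑ i ∈ ra.index, Coalgebra.counit (R := k) (ra.left i) •
          applySnd k φ (((1 : A) ⊗ₜ[k] ra.right i) * Coalgebra.comul (R := k) b) := by
        simp only [tmul_sum, tmul_smul, Finset.sum_mul, smul_mul_assoc, map_sum, map_smul]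
    _ = ∑ i ∈ ra.index, φ (ra.right i * b) • HopfAlgebra.antipode (R := k) (ra.left i) :=
        key2
    _ = applySnd k (φ ∘ₗ LinearMap.mulRight k b)
          (LinearMap.rTensor A (HopfAlgebra.antipode (R := k)) (Coalgebra.comul (R := k) a)) := by
        rw [← ra.eq]
        simp [map_sum]

end Hopf2

section Hopf3
set_option synthInstance.maxHeartbeats 400000
variable {k : Type*} [Field k] {A : Type*} [Ring A] [HopfAlgebra k A]
open Coalgebra TensorProduct HopfAlgebra

lemma applyFst_assoc_tmul (φ : A →ₗ[k] k) (w : A ⊗[k] A) (r : A) :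
    applyFst k φ ((TensorProduct.assoc k A A A) (w ⊗ₜ[k] r))
      = (applyFst k φ w) ⊗ₜ[k] r := by
  induction w using TensorProduct.induction_on with
  | zero => rw [zero_tmul, LinearEquiv.map_zero, map_zero, map_zero, zero_tmul]
  | tmul u v => simp [smul_tmul]
  | add s t hs ht =>
      rw [add_tmul, LinearEquiv.map_add, map_add, hs, ht, map_add, add_tmul]

lemma modular_grouplike (φ : A →ₗ[k] k) (δ : A)
    (hδ : ∀ a : A, applyFst k φ (Coalgebra.comul a) = φ a • δ)
    (a₀ : A) (ha₀ : φ a₀ = 1) :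
    Coalgebra.comul (R := k) δ = δ ⊗ₜ[k] δ := by
  classical
  set r := ℛ k a₀ with hr
  have hsum : ∑ i ∈ r.index, φ (r.left i) • r.right i = δ := by
    have h := hδ a₀
    rw [← r.eq] at h
    simpa [map_sum, ha₀] using h
  have hco := congrArg (applyFst k φ) (Coalgebra.coassoc_apply (R := k) a₀)
  -- right side of hco
  have hrhs : applyFst k φ ((Coalgebra.comul (R := k)).lTensor A (Coalgebra.comul (R := k) a₀))
      = Coalgebra.comul (R := k) δ := by
    rw [← r.eq]
    simp only [map_sum, LinearMap.lTensor_tmul, applyFst_tmul]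
    rw [← hsum]
    simp only [map_sum, map_smul]
  -- left side of hco
  have hlhs : applyFst k φ ((TensorProduct.assoc k A A A)
        ((Coalgebra.comul (R := k)).rTensor A (Coalgebra.comul (R := k) a₀)))
      = δ ⊗ₜ[k] δ := by
    rw [← r.eq]
    simp only [map_sum, LinearMap.rTensor_tmul, applyFst_assoc_tmul]
    have : ∀ i ∈ r.index, applyFst k φ (Coalgebra.comul (R := k) (r.left i)) ⊗ₜ[k] r.right i
        = δ ⊗ₜ[k] (φ (r.left i) • r.right i) := by
      intro i _
      rw [hδ, smul_tmul]
    rw [Finset.sum_congr rfl this, ← tmul_sum, hsum]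
  rw [hlhs, hrhs] at hco
  exact hco.symm

lemma twisted_integral_unique (φ : A →ₗ[k] k)
    (hφint : ∀ a : A, applySnd k φ (Coalgebra.comul a) = φ a • (1 : A))
    (hfl : ∀ a : A, (∀ b : A, φ (a * b) = 0) → a = 0)
    (hfr : ∀ a : A, (∀ b : A, φ (b * a) = 0) → a = 0)
    (hφne : φ ≠ 0)
    (hS : Function.Bijective (HopfAlgebra.antipode (R := k) (A := A)))
    (δ : Aˣ) (hδ : ∀ a : A, applyFst k φ (Coalgebra.comul a) = φ a • (δ : A))
    (lam : A →ₗ[k] k) (hlam : ∀ a : A, applyFst k lam (Coalgebra.comul a) = lam a • (δ : A)) :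
    ∃ c : k, lam = c • φ := by
  classical
  -- get a₀ with φ a₀ = 1
  obtain ⟨b₀, hb₀⟩ : ∃ b, φ b ≠ 0 := by
    by_contra h
    push_neg at h
    exact hφne (by ext x; simpa using h x)
  set a₀ := (φ b₀)⁻¹ • b₀ with ha₀def
  have ha₀ : φ a₀ = 1 := by simp [ha₀def, inv_mul_cancel₀ hb₀]
  have hgrp : Coalgebra.comul (R := k) ((δ : A)) = (δ : A) ⊗ₜ[k] (δ : A) :=
    modular_grouplike φ (δ : A) hδ a₀ ha₀
  -- main step: every δ-twisted integral ν satisfies ν (S a * δ) = φ a * c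
  have main : ∀ ν : A →ₗ[k] k, (∀ a : A, applyFst k ν (Coalgebra.comul a) = ν a • (δ : A)) →
      ∃ c : k, ∀ a : A, ν (HopfAlgebra.antipode (R := k) a * δ) = φ a * c := by
    intro ν hν
    set μ : A →ₗ[k] k := ν ∘ₗ LinearMap.mulRight k (δ : A) with hμdef
    have hμ : ∀ x : A, μ x = ν (x * δ) := fun x => rfl
    -- μ is a right integral
    have hμr : ∀ a : A, applyFst k μ (Coalgebra.comul a) = μ a • (1 : A) := by
      intro a
      have h1 := hν (a * δ)
      rw [Bialgebra.comul_mul, hgrp, applyFst_mul_tmul, ← hμdef, ← hμ a] at h1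
      calc applyFst k μ (Coalgebra.comul a)
          = applyFst k μ (Coalgebra.comul a) * δ * (δ⁻¹ : Aˣ) := by
            rw [Units.mul_inv_cancel_right]
        _ = (μ a • (δ : A)) * (δ⁻¹ : Aˣ) := by rw [h1]
        _ = μ a • ((δ : A) * (δ⁻¹ : Aˣ)) := by rw [smul_mul_assoc]
        _ = μ a • (1 : A) := by rw [Units.mul_inv]
    -- the ‡ identity
    have hdag : ∀ a b : A,
        φ (applyFst k (μ ∘ₗ HopfAlgebra.antipode (R := k)) (Coalgebra.comul a) * b)
          = μ b * φ a := by
      intro a b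
      have h1 := congrArg μ (strong_invariance φ hφint a b)
      rw [applyFst_applySnd_swap, applyFst_applySnd_swap] at h1
      rw [applyFst_rTensor, hμr b] at h1
      simp only [LinearMap.coe_comp, Function.comp_apply, LinearMap.mulLeft_apply,
        LinearMap.mulRight_apply, mul_smul_comm, mul_one, map_smul, smul_eq_mul] at h1
      rw [← h1]
    set w := applyFst k (μ ∘ₗ HopfAlgebra.antipode (R := k)) (Coalgebra.comul a₀) with hwdef
    have hw : ∀ b : A, φ (w * b) = μ b := by
      intro b
      have := hdag a₀ b
      rwa [ha₀, mul_one] at this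
    have hwa : ∀ a : A,
        applyFst k (μ ∘ₗ HopfAlgebra.antipode (R := k)) (Coalgebra.comul a) = φ a • w := by
      intro a
      have hz : ∀ b : A,
          φ ((applyFst k (μ ∘ₗ HopfAlgebra.antipode (R := k)) (Coalgebra.comul a) - φ a • w)
            * b) = 0 := by
        intro b
        rw [sub_mul, map_sub, hdag, smul_mul_assoc, map_smul, hw, smul_eq_mul]
        ring
      have := hfl _ hz
      rwa [sub_eq_zero] at this
    refine ⟨Coalgebra.counit (R := k) w, fun a => ?_⟩
    have h2 := congrArg (Coalgebra.counit (R := k)) (hwa a)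
    rw [← applyFst_applySnd_swap, applySnd_counit_comul, map_smul, smul_eq_mul] at h2
    simpa [hμ, LinearMap.comp_apply] using h2
  obtain ⟨c₁, hc₁⟩ := main lam hlam
  obtain ⟨c₀, hc₀⟩ := main φ hδ
  have hc₀ne : c₀ ≠ 0 := by
    intro h0
    have hzero : ∀ b : A, φ (b * δ) = 0 := by
      intro b
      obtain ⟨a, ha⟩ := hS.2 b
      rw [← ha, hc₀, h0, mul_zero]
    have hδ0 : (δ : A) = 0 := hfr _ hzero
    have h10 : (1 : A) = 0 := by
      have := δ.inv_mul
      rw [hδ0, mul_zero] at this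
      exact this.symm
    apply hφne
    ext x
    have : x = 0 := by
      calc x = x * 1 := (mul_one x).symm
        _ = 0 := by rw [h10, mul_zero]
    simp [this]
  refine ⟨c₁ / c₀, ?_⟩
  ext b
  obtain ⟨a, ha⟩ := hS.2 ((b : A) * (δ⁻¹ : Aˣ))
  have hb : HopfAlgebra.antipode (R := k) a * δ = b := by
    rw [ha, Units.inv_mul_cancel_right]
  have e1 : lam b = φ a * c₁ := by rw [← hb, hc₁]
  have e0 : φ b = φ a * c₀ := by rw [← hb, hc₀]
  rw [LinearMap.smul_apply, smul_eq_mul, e1, e0]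
  field_simp

end Hopf3

section Galois
set_option synthInstance.maxHeartbeats 400000
set_option maxHeartbeats 1000000
variable {k : Type*} [Field k] {A X : Type*} [Ring A] [HopfAlgebra k A]
  [Ring X] [Algebra k X]
open TensorProduct HopfAlgebra

lemma galoisV_tmul (G : GaloisContext k A X) (x y : X) :
    galoisV k A X G.α (x ⊗ₜ[k] y) = (x ⊗ₜ[k] (1 : A)) * G.α y := by
  simp [galoisV]

lemma V_tmul (G : GaloisContext k A X) (x y : X) :
    G.V (x ⊗ₜ[k] y) = (x ⊗ₜ[k] (1 : A)) * G.α y :=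
  galoisV_tmul G x y

lemma V_one_tmul (G : GaloisContext k A X) (x : X) :
    G.V ((1 : X) ⊗ₜ[k] x) = G.α x := by
  rw [V_tmul, ← Algebra.TensorProduct.one_def, one_mul]

lemma V_mul_left (G : GaloisContext k A X) (z : X) (t : X ⊗[k] X) :
    G.V ((z ⊗ₜ[k] (1 : X)) * t) = (z ⊗ₜ[k] (1 : A)) * G.V t := by
  induction t using TensorProduct.induction_on with
  | zero => rw [mul_zero, LinearEquiv.map_zero, mul_zero]
  | tmul x y =>
      rw [Algebra.TensorProduct.tmul_mul_tmul, one_mul, V_tmul, V_tmul,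
        ← mul_assoc, Algebra.TensorProduct.tmul_mul_tmul, mul_one]
  | add s t hs ht => rw [mul_add, LinearEquiv.map_add, hs, ht, LinearEquiv.map_add, mul_add]

lemma V_beta (G : GaloisContext k A X) (a : A) :
    G.V (G.β a) = (1 : X) ⊗ₜ[k] a := by
  simp [GaloisContext.β]

lemma Vsymm_tmul (G : GaloisContext k A X) (z : X) (a : A) :
    G.V.symm (z ⊗ₜ[k] a) = (z ⊗ₜ[k] (1 : X)) * G.β a := by
  apply G.V.injective
  rw [LinearEquiv.apply_symm_apply, V_mul_left, V_beta,
    Algebra.TensorProduct.tmul_mul_tmul, mul_one, one_mul]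

lemma Vsymm_alpha (G : GaloisContext k A X) (x : X) :
    G.V.symm (G.α x) = (1 : X) ⊗ₜ[k] x := by
  apply G.V.injective
  rw [LinearEquiv.apply_symm_apply, V_one_tmul]

lemma beta_coacts (G : GaloisContext k A X) (a : A) :
    (TensorProduct.assoc k X X A).symm (LinearMap.lTensor X G.α.toLinearMap (G.β a))
      = LinearMap.rTensor A G.β (Coalgebra.comul (R := k) a) := by
  classical
  set W : (X ⊗[k] X) ⊗[k] A ≃ₗ[k] (X ⊗[k] A) ⊗[k] A :=
    TensorProduct.congr G.V (LinearEquiv.refl k A) with hW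
  apply W.injective
  -- claim (a)
  have ca : ∀ (u : X) (s : X ⊗[k] A),
      W ((TensorProduct.assoc k X X A).symm (u ⊗ₜ[k] s))
        = ((u ⊗ₜ[k] (1 : A)) ⊗ₜ[k] (1 : A)) * LinearMap.rTensor A G.α.toLinearMap s := by
    intro u s
    induction s using TensorProduct.induction_on with
    | zero => rw [tmul_zero, LinearEquiv.map_zero, LinearEquiv.map_zero, map_zero, mul_zero]
    | tmul p q =>
        rw [_root_.TensorProduct.assoc_symm_tmul, congr_tmul, LinearEquiv.refl_apply, V_tmul,
          LinearMap.rTensor_tmul, Algebra.TensorProduct.tmul_mul_tmul, one_mul,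
          AlgHom.toLinearMap_apply]
    | add s t hs ht =>
        rw [tmul_add, LinearEquiv.map_add, LinearEquiv.map_add, hs, ht, map_add, mul_add]
  -- claim (b1)
  have cb1 : ∀ (u : X) (s : X ⊗[k] A),
      LinearMap.lTensor X (Coalgebra.comul (R := k)) ((u ⊗ₜ[k] (1 : A)) * s)
        = (u ⊗ₜ[k] (1 : A ⊗[k] A)) * LinearMap.lTensor X (Coalgebra.comul (R := k)) s := by
    intro u s
    induction s using TensorProduct.induction_on with
    | zero => rw [mul_zero, map_zero, mul_zero]
    | tmul p q =>
        rw [Algebra.TensorProduct.tmul_mul_tmul, one_mul, LinearMap.lTensor_tmul,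
          LinearMap.lTensor_tmul, Algebra.TensorProduct.tmul_mul_tmul, one_mul]
    | add s t hs ht => rw [mul_add, map_add, hs, ht, map_add, mul_add]
  -- claim (b2)
  have cb2 : ∀ (u : X) (s : X ⊗[k] (A ⊗[k] A)),
      (TensorProduct.assoc k X A A).symm ((u ⊗ₜ[k] (1 : A ⊗[k] A)) * s)
        = ((u ⊗ₜ[k] (1 : A)) ⊗ₜ[k] (1 : A)) * (TensorProduct.assoc k X A A).symm s := by
    intro u s
    induction s using TensorProduct.induction_on with
    | zero => rw [mul_zero, LinearEquiv.map_zero, mul_zero]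
    | tmul p w =>
        induction w using TensorProduct.induction_on with
        | zero => simp only [tmul_zero, mul_zero, LinearEquiv.map_zero]
        | tmul c d =>
            rw [Algebra.TensorProduct.tmul_mul_tmul, one_mul, _root_.TensorProduct.assoc_symm_tmul, _root_.TensorProduct.assoc_symm_tmul,
              Algebra.TensorProduct.tmul_mul_tmul, Algebra.TensorProduct.tmul_mul_tmul,
              one_mul, one_mul]
        | add s t hs ht =>
            rw [tmul_add, mul_add, LinearEquiv.map_add, hs, ht, LinearEquiv.map_add, mul_add]
    | add s t hs ht => rw [mul_add, LinearEquiv.map_add, hs, ht, LinearEquiv.map_add, mul_add]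
  -- claim C1
  have c1 : ∀ t : X ⊗[k] X,
      W ((TensorProduct.assoc k X X A).symm (LinearMap.lTensor X G.α.toLinearMap t))
        = (TensorProduct.assoc k X A A).symm
            (LinearMap.lTensor X (Coalgebra.comul (R := k)) (G.V t)) := by
    intro t
    induction t using TensorProduct.induction_on with
    | zero => rw [map_zero, LinearEquiv.map_zero, LinearEquiv.map_zero, LinearEquiv.map_zero,
        map_zero, LinearEquiv.map_zero]
    | tmul u v =>
        rw [LinearMap.lTensor_tmul, ca u, V_tmul, cb1, cb2, ← G.coassoc v,
          LinearEquiv.symm_apply_apply, AlgHom.toLinearMap_apply]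
    | add s t hs ht =>
        rw [map_add, LinearEquiv.map_add, LinearEquiv.map_add, hs, ht, LinearEquiv.map_add,
          map_add, LinearEquiv.map_add]
  have c23 : ∀ s : A ⊗[k] A,
      (TensorProduct.assoc k X A A).symm ((1 : X) ⊗ₜ[k] s)
        = W (LinearMap.rTensor A G.β s) := by
    intro s
    induction s using TensorProduct.induction_on with
    | zero => rw [tmul_zero, LinearEquiv.map_zero, map_zero, LinearEquiv.map_zero]
    | tmul c d =>
        rw [_root_.TensorProduct.assoc_symm_tmul, LinearMap.rTensor_tmul, congr_tmul, LinearEquiv.refl_apply, V_beta]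
    | add s t hs ht =>
        rw [tmul_add, LinearEquiv.map_add, hs, ht, map_add, LinearEquiv.map_add]
  rw [c1 (G.β a), V_beta, LinearMap.lTensor_tmul, c23]


lemma applySnd_rTensor_assoc_symm (f : X →ₗ[k] k) (s : X ⊗[k] (X ⊗[k] A)) :
    LinearMap.rTensor A (applySnd k f) ((TensorProduct.assoc k X X A).symm s)
      = LinearMap.lTensor X (applyFst k f) s := by
  induction s using TensorProduct.induction_on with
  | zero => simp only [LinearEquiv.map_zero, map_zero]
  | tmul u w =>
      induction w using TensorProduct.induction_on with
      | zero => simp only [tmul_zero, LinearEquiv.map_zero, map_zero]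
      | tmul p q =>
          rw [_root_.TensorProduct.assoc_symm_tmul, LinearMap.rTensor_tmul,
            LinearMap.lTensor_tmul, applySnd_tmul, applyFst_tmul, smul_tmul, tmul_smul]
      | add s t hs ht =>
          rw [tmul_add, LinearEquiv.map_add, map_add, hs, ht, map_add]
  | add s t hs ht => rw [LinearEquiv.map_add, map_add, hs, ht, map_add]

lemma fmap_equation (G : GaloisContext k A X) (φX' : X →ₗ[k] k) (δ : Aˣ)
    (hφX' : ∀ x : X, applyFst k φX' (G.α x) = φX' x • (δ : A)) (a : A) :
    LinearMap.rTensor A (applySnd k φX' ∘ₗ G.β) (Coalgebra.comul (R := k) a)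
      = (applySnd k φX' (G.β a)) ⊗ₜ[k] (δ : A) := by
  have h := congrArg (LinearMap.rTensor A (applySnd k φX')) (beta_coacts G a)
  rw [applySnd_rTensor_assoc_symm, ← LinearMap.lTensor_comp_apply] at h
  have hcomp : applyFst k φX' ∘ₗ G.α.toLinearMap
      = LinearMap.toSpanSingleton k A (δ : A) ∘ₗ φX' := by
    ext x
    simp only [LinearMap.coe_comp, Function.comp_apply, AlgHom.toLinearMap_apply,
      LinearMap.toSpanSingleton_apply]
    exact hφX' x
  rw [hcomp, lTensor_toSpanSingleton, ← LinearMap.rTensor_comp_apply] at h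
  exact h.symm

end Galois
theorem galois_object_delta_invariant_functional_unique
    {k : Type*} [Field k] {A X : Type*} [Ring A] [HopfAlgebra k A]
    [Ring X] [Algebra k X] [Nontrivial X]
    (G : GaloisContext k A X)
    (φX : X →ₗ[k] k)
    (hφX : ∀ x : X, applySnd k G.φ (G.α x) = φX x • (1 : X))
    (δ : Aˣ) (hδ : ∀ a : A, applyFst k G.φ (Coalgebra.comul a) = G.φ a • (↑δ : A))
    (φX' : X →ₗ[k] k)
    (hφX' : ∀ x : X, applyFst k φX' (G.α x) = φX' x • (↑δ : A)) :
    ∃ c : k, φX' = c • φX := by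
  classical
  set fm : A →ₗ[k] X := applySnd k φX' ∘ₗ G.β with hfm
  have hE : ∀ a : A, LinearMap.rTensor A fm (Coalgebra.comul (R := k) a)
      = fm a ⊗ₜ[k] (δ : A) := by
    intro a
    have := fmap_equation G φX' δ hφX' a
    simpa [hfm] using this
  -- each dual functional composed with fm is a δ-twisted integral
  have hprop : ∀ ξ : Module.Dual k X, ∃ c : k, ξ ∘ₗ fm = c • G.φ := by
    intro ξ
    refine twisted_integral_unique G.φ G.φ_integral G.φ_faithful_left G.φ_faithful_right
      G.φ_ne G.antipode_bijective δ hδ (ξ ∘ₗ fm) ?_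
    intro a
    have h := congrArg (applyFst k ξ) (hE a)
    rw [applyFst_rTensor, applyFst_tmul] at h
    simpa using h
  -- normalize φ
  obtain ⟨b₀, hb₀⟩ : ∃ b, G.φ b ≠ 0 := by
    by_contra h
    push_neg at h
    exact G.φ_ne (by ext x; simpa using h x)
  set a₀ := (G.φ b₀)⁻¹ • b₀ with ha₀def
  have ha₀ : G.φ a₀ = 1 := by simp [ha₀def, inv_mul_cancel₀ hb₀]
  set v := fm a₀ with hv
  have hfm_eq : ∀ a : A, fm a = G.φ a • v := by
    intro a
    rw [← sub_eq_zero, ← Module.forall_dual_apply_eq_zero_iff k]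
    intro ξ
    obtain ⟨c, hc⟩ := hprop ξ
    have h1 : ξ (fm a) = c * G.φ a := by
      have := LinearMap.congr_fun hc a
      simpa using this
    have h2 : ξ v = c := by
      have := LinearMap.congr_fun hc a₀
      simpa [ha₀] using this
    simp only [map_sub, map_smul, h1, h2, smul_eq_mul]
    ring
  -- the fundamental relation  φX' x • 1 = φX x • v
  have hrel : ∀ x : X, φX' x • (1 : X) = φX x • v := by
    intro x
    obtain ⟨s, hs⟩ := TensorProduct.exists_finset (R := k) (G.α x)
    have h3 : (1 : X) ⊗ₜ[k] x = ∑ i ∈ s, (i.1 ⊗ₜ[k] (1 : X)) * G.β i.2 := by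
      rw [← Vsymm_alpha G x, hs, map_sum]
      exact Finset.sum_congr rfl fun i _ => Vsymm_tmul G i.1 i.2
    have h4 := congrArg (applySnd k φX') h3
    rw [applySnd_tmul, map_sum] at h4
    have h5 : ∀ i ∈ s, applySnd k φX' ((i.1 ⊗ₜ[k] (1 : X)) * G.β i.2)
        = G.φ i.2 • (i.1 * v) := by
      intro i _
      rw [applySnd_one_mul]
      have : applySnd k φX' (G.β i.2) = fm i.2 := rfl
      rw [this, hfm_eq, mul_smul_comm]
    rw [Finset.sum_congr rfl h5] at h4
    have h6 : ∑ i ∈ s, G.φ i.2 • (i.1 * v) = (∑ i ∈ s, G.φ i.2 • i.1) * v := by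
      rw [Finset.sum_mul]
      exact Finset.sum_congr rfl fun i _ => (smul_mul_assoc _ _ _).symm
    have h7 : ∑ i ∈ s, G.φ i.2 • i.1 = φX x • (1 : X) := by
      have := hφX x
      rw [hs, map_sum] at this
      simpa using this
    rw [h6, h7, smul_mul_assoc, one_mul] at h4
    exact h4
  -- conclude
  by_cases hzero : ∀ x : X, φX x = 0
  · refine ⟨0, ?_⟩
    ext x
    have h := hrel x
    rw [hzero x, zero_smul] at h
    rcases smul_eq_zero.mp h with h' | h'
    · simpa using h'
    · exact absurd h' one_ne_zero
  · push_neg at hzero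
    obtain ⟨x₀, hx₀⟩ := hzero
    set c := φX' x₀ / φX x₀ with hcdef
    have hveq : v = c • (1 : X) := by
      have h := hrel x₀
      have : v = (φX x₀)⁻¹ • (φX' x₀ • (1 : X)) := by
        rw [h, inv_smul_smul₀ hx₀]
      rw [this, smul_smul, hcdef, div_eq_inv_mul]
    refine ⟨c, ?_⟩
    ext x
    have h := hrel x
    rw [hveq, smul_smul] at h
    have h8 : (φX' x - φX x * c) • (1 : X) = 0 := by
      rw [sub_smul, h, sub_self]
    have h9 : φX' x = φX x * c := by
      rcases smul_eq_zero.mp h8 with h' | h'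
      · exact sub_eq_zero.mp h'
      · exact absurd h' one_ne_zero
    simp [h9, mul_comm]
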